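/- Let m ≥ 2, 0 < a ≤ 1/4, and 1/(2m) < α < 1/m, and set r_i = a i^{-α}. For r > 0 let H_{B(0;r)}(t) = ∫_{B(0;r)} ∫_{B(0;r)} (4πt)^{-m/2} e^{-|x−y|²/(4t)} dy dx be the heat content of the ball B(0;r) ⊆ ℝ^m. Then for every t > 0, ∑_{i=1}^∞ H_{B(0; a i^{-α})}(t) ≤ ∫_0^∞ H_{B(0; a s^{-α})}(t) ds = c_{α,m} t^{(mα−1)/(2α)}, where c_{α,m} = 2^{m−1−1/α} π^{-m/2} α^{-1} Γ((2mα−1)/(2α)) a^{1/α} ∫_{B(0;1)} ∫_{B(0;1)} |x−y|^{(1−2mα)/α} dy dx and Γ is the Gamma function. -/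

import Mathlib

open MeasureTheory Metric ENNReal

/-- The heat content of an open set `Ω ⊆ ℝᵐ` at time `t`, computed with the Euclidean
heat kernel `p(x,y;t) = (4πt)^{-m/2} e^{-|x-y|²/(4t)}`. -/
noncomputable def heatContent {m : ℕ} (Ω : Set (EuclideanSpace ℝ (Fin m))) (t : ℝ) :
    ℝ≥0∞ :=
  ∫⁻ x in Ω, ∫⁻ y in Ω,
    ENNReal.ofReal ((4 * Real.pi * t) ^ (-(m : ℝ) / 2) * Real.exp (-dist x y ^ 2 / (4 * t)))

section Auxiliary

open Set

lemma lint_ball_smul {m : ℕ} {f : EuclideanSpace ℝ (Fin m) → ℝ≥0∞} (hf : Measurable f)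
    {r : ℝ} (hr : 0 < r) :
    ∫⁻ x in ball (0 : EuclideanSpace ℝ (Fin m)) r, f x
      = ENNReal.ofReal (r ^ m) * ∫⁻ u in ball (0 : EuclideanSpace ℝ (Fin m)) 1, f (r • u) := by
  have hmap : Measure.map (fun u : EuclideanSpace ℝ (Fin m) => r • u) volume
      = ENNReal.ofReal |(r ^ m)⁻¹| • volume := by
    have := Measure.map_addHaar_smul (volume : Measure (EuclideanSpace ℝ (Fin m))) hr.ne'
    rwa [finrank_euclideanSpace_fin] at this
  have hpre : (fun u : EuclideanSpace ℝ (Fin m) => r • u) ⁻¹' (ball 0 r) = ball 0 1 := by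
    ext u
    simp only [Set.mem_preimage, mem_ball, dist_zero_right, norm_smul, Real.norm_eq_abs,
      abs_of_pos hr]
    exact mul_lt_iff_lt_one_right hr
  have key : ∫⁻ u in ball (0 : EuclideanSpace ℝ (Fin m)) 1, f (r • u)
      = ENNReal.ofReal |(r ^ m)⁻¹| * ∫⁻ x in ball (0 : EuclideanSpace ℝ (Fin m)) r, f x := by
    rw [← hpre, ← lintegral_map hf (measurable_const_smul r),
      ← Measure.restrict_map (measurable_const_smul r) measurableSet_ball, hmap,
      Measure.restrict_smul, lintegral_smul_measure, smul_eq_mul]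
  rw [key, ← mul_assoc, ← ENNReal.ofReal_mul (by positivity), abs_of_pos (by positivity),
    mul_inv_cancel₀ (by positivity), ENNReal.ofReal_one, one_mul]

lemma key_one_dim {b e C : ℝ} (hb : 0 < b) (he : 1 < e) (hC : 0 < C) :
    IntegrableOn (fun s : ℝ => s ^ (-e) * Real.exp (-C * s ^ (-b))) (Ioi 0) ∧
      ∫ s in Ioi (0:ℝ), s ^ (-e) * Real.exp (-C * s ^ (-b))
        = b⁻¹ * (C ^ (-((e - 1) / b)) * Real.Gamma ((e - 1) / b)) := by
  set A : ℝ := (e - 1) / b with hA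
  have hA0 : 0 < A := div_pos (by linarith) hb
  have hbA : b * A = e - 1 := by rw [hA]; field_simp
  set g : ℝ → ℝ := fun y => y ^ (A - 1) * Real.exp (-C * y) with hg
  have hg_int : IntegrableOn g (Ioi 0) := by
    have h := integrableOn_rpow_mul_exp_neg_mul_rpow (s := A - 1) (p := 1)
      (by linarith) one_pos hC
    refine h.congr_fun (fun x hx => ?_) measurableSet_Ioi
    simp [hg, Real.rpow_one]
  have hg_val : ∫ y in Ioi (0:ℝ), g y = C ^ (-A) * Real.Gamma A := by
    have h := integral_rpow_mul_exp_neg_mul_rpow (p := 1) (q := A - 1) (b := C)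
      one_pos (by linarith) hC
    simp only [Real.rpow_one] at h
    rw [hg]; dsimp only
    rw [h, show -(A - 1 + 1) / 1 = -A by ring, show (A - 1 + 1) / 1 = A by ring, mul_one_div,
      div_one]
  have hbne : -b ≠ 0 := by linarith
  have hkey : ∀ x ∈ Ioi (0:ℝ),
      (|(-b)| * x ^ (-b - 1)) • g (x ^ (-b)) = b * (x ^ (-e) * Real.exp (-C * x ^ (-b))) := by
    intro x hx
    have hx0 : (0:ℝ) < x := hx
    have hxe : x ^ (-b - 1) * x ^ (-b * (A - 1)) = x ^ (-e) := by
      rw [← Real.rpow_add hx0]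
      congr 1
      linear_combination -hbA
    simp only [smul_eq_mul, abs_neg, abs_of_pos hb, hg]
    rw [← Real.rpow_mul hx0.le, ← hxe]
    ring
  constructor
  · have h1 := (integrableOn_Ioi_comp_rpow_iff g hbne).mpr hg_int
    have h2 : IntegrableOn (fun x : ℝ => b * (x ^ (-e) * Real.exp (-C * x ^ (-b)))) (Ioi 0) :=
      h1.congr_fun hkey measurableSet_Ioi
    have h3 : IntegrableOn (fun x : ℝ => b⁻¹ * (b * (x ^ (-e) * Real.exp (-C * x ^ (-b)))))
        (Ioi 0) := h2.const_mul b⁻¹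
    refine h3.congr_fun (fun x _ => ?_) measurableSet_Ioi
    field_simp
  · have hval := integral_comp_rpow_Ioi g hbne
    rw [setIntegral_congr_fun measurableSet_Ioi hkey, integral_const_mul, hg_val] at hval
    have : (∫ s in Ioi (0:ℝ), s ^ (-e) * Real.exp (-C * s ^ (-b)))
        = b⁻¹ * (b * ∫ s in Ioi (0:ℝ), s ^ (-e) * Real.exp (-C * s ^ (-b))) := by
      field_simp
    rw [this, hval]

lemma lint_rpow_ball_lt_top {m : ℕ} (hm : 1 ≤ m) {P : ℝ} (hP : -(m:ℝ) < P) (hP0 : P < 0) :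
    ∫⁻ w in ball (0 : EuclideanSpace ℝ (Fin m)) 2, ENNReal.ofReal (‖w‖ ^ P) < ⊤ := by
  haveI : Nonempty (Fin m) := ⟨⟨0, by omega⟩⟩
  set q : ℝ := (2:ℝ) ^ (-(P + (m:ℝ))) with hq
  have hq0 : 0 < q := Real.rpow_pos_of_pos two_pos _
  have hq1 : q < 1 := Real.rpow_lt_one_of_one_lt_of_neg one_lt_two (by linarith)
  set A : ℕ → Set (EuclideanSpace ℝ (Fin m)) := fun n =>
    ball 0 ((2:ℝ) ^ (1 - (n:ℝ))) \ ball 0 ((2:ℝ) ^ (-(n:ℝ))) with hA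
  have hcover : ball (0 : EuclideanSpace ℝ (Fin m)) 2 ⊆ {0} ∪ ⋃ n, A n := by
    intro w hw
    rcases eq_or_ne w 0 with rfl | hw0
    · exact Or.inl rfl
    right
    have hwpos : 0 < ‖w‖ := norm_pos_iff.2 hw0
    have hwlt : ‖w‖ < 2 := by simpa [mem_ball, dist_zero_right] using hw
    have hex : ∃ n : ℕ, (2:ℝ) ^ (-(n:ℝ)) ≤ ‖w‖ := by
      obtain ⟨n, hn⟩ := exists_pow_lt_of_lt_one hwpos (by norm_num : (2:ℝ)⁻¹ < 1)
      refine ⟨n, ?_⟩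
      calc (2:ℝ) ^ (-(n:ℝ)) = ((2:ℝ) ^ (n:ℕ))⁻¹ := by
            rw [Real.rpow_neg two_pos.le, Real.rpow_natCast]
        _ = ((2:ℝ)⁻¹) ^ (n:ℕ) := (inv_pow 2 n).symm
        _ ≤ ‖w‖ := hn.le
    set n₀ := Nat.find hex with hn₀
    have h1 : (2:ℝ) ^ (-(n₀:ℝ)) ≤ ‖w‖ := Nat.find_spec hex
    have h2 : ‖w‖ < (2:ℝ) ^ (1 - (n₀:ℝ)) := by
      rcases Nat.eq_zero_or_pos n₀ with h | h
      · rw [h]; simpa using hwlt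
      · have := Nat.find_min hex (m := n₀ - 1) (by omega)
        push_neg at this
        have hcast : 1 - (n₀:ℝ) = -((n₀ - 1 : ℕ):ℝ) := by
          have : (1:ℕ) ≤ n₀ := h
          push_cast [Nat.cast_sub this]
          ring
        rw [hcast]
        exact this
    exact Set.mem_iUnion.2 ⟨n₀, by
      simp [hA, mem_ball, dist_zero_right, hwlt, h2, not_lt.2 h1]; simpa [Real.rpow_neg, Real.rpow_natCast] using h1⟩
  refine lt_of_le_of_lt (lintegral_mono_set hcover) ?_
  refine lt_of_le_of_lt (lintegral_union_le _ _ _) ?_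
  have hzero : ∫⁻ w in ({0} : Set (EuclideanSpace ℝ (Fin m))), ENNReal.ofReal (‖w‖ ^ P) = 0 := by
    rw [Measure.restrict_singleton, measure_singleton]
    simp
  rw [hzero, zero_add]
  refine lt_of_le_of_lt (lintegral_iUnion_le _ _) ?_
  have hterm : ∀ n : ℕ, ∫⁻ w in A n, ENNReal.ofReal (‖w‖ ^ P)
      ≤ ENNReal.ofReal ((2:ℝ) ^ (m:ℝ)) * ENNReal.ofReal q ^ n
        * volume (ball (0 : EuclideanSpace ℝ (Fin m)) 1) := by
    intro n
    have hb : ∀ w ∈ A n, ENNReal.ofReal (‖w‖ ^ P)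
        ≤ ENNReal.ofReal (((2:ℝ) ^ (-(n:ℝ))) ^ P) := by
      intro w hw
      apply ENNReal.ofReal_le_ofReal
      exact Real.rpow_le_rpow_of_nonpos (Real.rpow_pos_of_pos two_pos _)
        (by simpa [hA, mem_ball, dist_zero_right, not_lt] using hw.2) hP0.le
    calc ∫⁻ w in A n, ENNReal.ofReal (‖w‖ ^ P)
        ≤ ∫⁻ _ in A n, ENNReal.ofReal (((2:ℝ) ^ (-(n:ℝ))) ^ P) :=
          setLIntegral_mono (by fun_prop) hb
      _ = ENNReal.ofReal (((2:ℝ) ^ (-(n:ℝ))) ^ P) * volume (A n) := setLIntegral_const _ _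
      _ ≤ ENNReal.ofReal (((2:ℝ) ^ (-(n:ℝ))) ^ P)
            * volume (ball (0 : EuclideanSpace ℝ (Fin m)) ((2:ℝ) ^ (1 - (n:ℝ)))) := by
          gcongr
          exact Set.diff_subset
      _ = ENNReal.ofReal ((2:ℝ) ^ (m:ℝ)) * ENNReal.ofReal q ^ n
            * volume (ball (0 : EuclideanSpace ℝ (Fin m)) 1) := by
          rw [Measure.addHaar_ball volume 0 (by positivity), finrank_euclideanSpace_fin,
            ← mul_assoc, ← ENNReal.ofReal_mul (by positivity), ← ENNReal.ofReal_pow hq0.le,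
            ← ENNReal.ofReal_mul (by positivity)]
          congr 1
          rw [← Real.rpow_natCast ((2:ℝ) ^ (1 - (n:ℝ))) m, ← Real.rpow_mul two_pos.le,
            ← Real.rpow_mul two_pos.le, hq, ← Real.rpow_natCast ((2:ℝ) ^ (-(P + (m:ℝ)))) n,
            ← Real.rpow_mul two_pos.le, ← Real.rpow_add two_pos, ← Real.rpow_add two_pos]
          congr 1
          ring
  refine lt_of_le_of_lt (ENNReal.tsum_le_tsum hterm) ?_
  rw [ENNReal.tsum_mul_right, ENNReal.tsum_mul_left, ENNReal.tsum_geometric]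
  have h1 : (1 - ENNReal.ofReal q)⁻¹ < ⊤ := by
    rw [ENNReal.inv_lt_top]
    exact tsub_pos_of_lt (by simpa using ENNReal.ofReal_lt_one.2 hq1)
  exact ENNReal.mul_lt_top (ENNReal.mul_lt_top ENNReal.ofReal_lt_top h1) measure_ball_lt_top

lemma lint_translate {m : ℕ} (P : ℝ) (u : EuclideanSpace ℝ (Fin m)) :
    ∫⁻ v in ball u 2, ENNReal.ofReal (‖u - v‖ ^ P)
      = ∫⁻ w in ball (0 : EuclideanSpace ℝ (Fin m)) 2, ENNReal.ofReal (‖w‖ ^ P) := by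
  have hmp : MeasurePreserving (fun x : EuclideanSpace ℝ (Fin m) => x + u) volume volume :=
    measurePreserving_add_right volume u
  have hemb : MeasurableEmbedding (fun x : EuclideanSpace ℝ (Fin m) => x + u) :=
    (MeasurableEquiv.addRight u).measurableEmbedding
  have hpre : (fun x : EuclideanSpace ℝ (Fin m) => x + u) ⁻¹' (ball u 2) = ball 0 2 := by
    ext x
    simp [mem_ball, dist_eq_norm]
  have := hmp.setLIntegral_comp_preimage_emb hemb
    (fun v => ENNReal.ofReal (‖u - v‖ ^ P)) (ball u 2)
  rw [hpre] at this
  rw [← this]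
  refine setLIntegral_congr_fun measurableSet_ball (fun w _ => ?_)
  congr 2
  rw [show u - (w + u) = -w by abel, norm_neg]

lemma int_prod_rpow {m : ℕ} (hm : 1 ≤ m) {P : ℝ} (hP : -(m:ℝ) < P) (hP0 : P < 0) :
    Integrable (fun z : EuclideanSpace ℝ (Fin m) × EuclideanSpace ℝ (Fin m) => ‖z.1 - z.2‖ ^ P)
      ((volume.restrict (ball 0 1)).prod (volume.restrict (ball 0 1))) := by
  have hfin := lint_rpow_ball_lt_top hm hP hP0
  constructor
  · exact (Measurable.aestronglyMeasurable (by fun_prop))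
  · rw [hasFiniteIntegral_iff_ofReal (ae_of_all _ fun z => Real.rpow_nonneg (norm_nonneg _) _)]
    rw [lintegral_prod _ (Measurable.aemeasurable (by fun_prop))]
    calc ∫⁻ x in ball (0:EuclideanSpace ℝ (Fin m)) 1, ∫⁻ y in ball 0 1,
            ENNReal.ofReal (‖x - y‖ ^ P)
        ≤ ∫⁻ _ in ball (0:EuclideanSpace ℝ (Fin m)) 1,
            (∫⁻ w in ball (0:EuclideanSpace ℝ (Fin m)) 2, ENNReal.ofReal (‖w‖ ^ P)) := by
          refine setLIntegral_mono (by fun_prop) fun x hx => ?_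
          have hsub : ball (0:EuclideanSpace ℝ (Fin m)) 1 ⊆ ball x 2 := by
            intro y hy
            rw [mem_ball] at hy ⊢
            calc dist y x ≤ ‖y‖ + ‖x‖ := by
                  rw [dist_eq_norm]; exact (norm_sub_le _ _)
              _ < 2 := by
                  have hx' : ‖x‖ < 1 := by simpa [mem_ball, dist_zero_right] using hx
                  have hy' : ‖y‖ < 1 := by simpa [dist_zero_right] using hy
                  linarith
          calc ∫⁻ y in ball (0:EuclideanSpace ℝ (Fin m)) 1, ENNReal.ofReal (‖x - y‖ ^ P)
              ≤ ∫⁻ y in ball x 2, ENNReal.ofReal (‖x - y‖ ^ P) := lintegral_mono_set hsub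
            _ = _ := lint_translate P x
      _ = (∫⁻ w in ball (0:EuclideanSpace ℝ (Fin m)) 2, ENNReal.ofReal (‖w‖ ^ P))
            * volume (ball (0:EuclideanSpace ℝ (Fin m)) 1) := setLIntegral_const _ _
      _ < ⊤ := ENNReal.mul_lt_top hfin measure_ball_lt_top

lemma heatContent_ball_scaled {m : ℕ} {r t : ℝ} (hr : 0 < r) :
    heatContent (ball (0 : EuclideanSpace ℝ (Fin m)) r) t
      = ∫⁻ u in ball (0 : EuclideanSpace ℝ (Fin m)) 1,
          ∫⁻ v in ball (0 : EuclideanSpace ℝ (Fin m)) 1,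
          ENNReal.ofReal (r ^ (2*m) *
            ((4*Real.pi*t) ^ (-(m:ℝ)/2) * Real.exp (-(r * dist u v) ^ 2 / (4*t)))) := by
  have hk : Measurable fun p : EuclideanSpace ℝ (Fin m) × EuclideanSpace ℝ (Fin m) =>
      ENNReal.ofReal ((4 * Real.pi * t) ^ (-(m:ℝ)/2) * Real.exp (-dist p.1 p.2 ^ 2 / (4*t))) := by
    fun_prop
  have hg : Measurable fun x : EuclideanSpace ℝ (Fin m) =>
      ∫⁻ y in ball (0 : EuclideanSpace ℝ (Fin m)) r,
        ENNReal.ofReal ((4 * Real.pi * t) ^ (-(m:ℝ)/2) * Real.exp (-dist x y ^ 2 / (4*t))) :=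
    Measurable.lintegral_prod_right' (f := fun p => ENNReal.ofReal ((4 * Real.pi * t) ^ (-(m:ℝ)/2)
      * Real.exp (-dist p.1 p.2 ^ 2 / (4*t)))) hk
  rw [heatContent, lint_ball_smul hg hr]
  have inner : ∀ u : EuclideanSpace ℝ (Fin m),
      (∫⁻ y in ball (0 : EuclideanSpace ℝ (Fin m)) r,
        ENNReal.ofReal ((4 * Real.pi * t) ^ (-(m:ℝ)/2) * Real.exp (-dist (r • u) y ^ 2 / (4*t))))
      = ENNReal.ofReal (r ^ m) * ∫⁻ v in ball (0 : EuclideanSpace ℝ (Fin m)) 1,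
          ENNReal.ofReal ((4*Real.pi*t) ^ (-(m:ℝ)/2) * Real.exp (-(r * dist u v) ^ 2 / (4*t))) := by
    intro u
    rw [lint_ball_smul (by fun_prop) hr]
    congr 1
    refine lintegral_congr fun v => ?_
    rw [dist_smul₀, Real.norm_eq_abs, abs_of_pos hr]
  simp_rw [inner]
  rw [lintegral_const_mul' _ _ ENNReal.ofReal_ne_top, ← mul_assoc,
    ← ENNReal.ofReal_mul (by positivity)]
  rw [← lintegral_const_mul' _ _ ENNReal.ofReal_ne_top]
  refine lintegral_congr fun u => ?_
  rw [← lintegral_const_mul' _ _ ENNReal.ofReal_ne_top]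
  refine lintegral_congr fun v => ?_
  rw [← ENNReal.ofReal_mul (by positivity)]
  congr 1
  rw [← pow_add]
  ring_nf

lemma inner_s_integral {m : ℕ} {a α t d : ℝ} (ha : 0 < a) (hα : 0 < α) (ht : 0 < t)
    (he : 1 < 2*(m:ℝ)*α) (hd : 0 < d) :
    ∫⁻ s in Ioi (0:ℝ), ENNReal.ofReal ((a * s ^ (-α)) ^ (2*m) *
        ((4*Real.pi*t) ^ (-(m:ℝ)/2) * Real.exp (-(a * s ^ (-α) * d) ^ 2 / (4*t))))
      = ENNReal.ofReal ((4*Real.pi*t) ^ (-(m:ℝ)/2) * a ^ (2*m) * (2*α)⁻¹ *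
          ((a^2*d^2/(4*t)) ^ (-((2*(m:ℝ)*α - 1)/(2*α)))
            * Real.Gamma ((2*(m:ℝ)*α - 1)/(2*α)))) := by
  set K : ℝ := (4*Real.pi*t) ^ (-(m:ℝ)/2) with hK
  have hK0 : 0 ≤ K := Real.rpow_nonneg (by positivity) _
  set e : ℝ := 2*(m:ℝ)*α with hee
  set b : ℝ := 2*α with hbb
  set C : ℝ := a^2*d^2/(4*t) with hCC
  have hC0 : 0 < C := by positivity
  obtain ⟨hint, hval⟩ := key_one_dim (b := b) (e := e) (C := C) (by positivity) he hC0
  have hcong : ∀ s ∈ Ioi (0:ℝ),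
      ENNReal.ofReal ((a * s ^ (-α)) ^ (2*m) * (K * Real.exp (-(a * s ^ (-α) * d) ^ 2 / (4*t))))
        = ENNReal.ofReal ((K * a ^ (2*m)) * (s ^ (-e) * Real.exp (-C * s ^ (-b)))) := by
    intro s hs
    have hs0 : (0:ℝ) < s := hs
    congr 1
    have h1 : (s ^ (-α)) ^ (2*m) = s ^ (-e) := by
      rw [← Real.rpow_natCast (s ^ (-α)) (2*m), ← Real.rpow_mul hs0.le]
      congr 1
      push_cast [hee]
      ring
    have h2 : (s ^ (-α)) ^ (2:ℕ) = s ^ (-b) := by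
      rw [← Real.rpow_natCast (s ^ (-α)) 2, ← Real.rpow_mul hs0.le]
      congr 1
      push_cast [hbb]
      ring
    have h3 : -(a * s ^ (-α) * d) ^ 2 / (4*t) = -C * s ^ (-b) := by
      rw [hCC, show (a * s ^ (-α) * d) ^ 2 = a^2 * d^2 * (s ^ (-α)) ^ (2:ℕ) by ring, h2]
      ring
    rw [mul_pow, h1, h3]
    ring
  rw [setLIntegral_congr_fun measurableSet_Ioi hcong]
  have hnn : 0 ≤ K * a ^ (2*m) := by positivity
  simp_rw [ENNReal.ofReal_mul hnn]
  rw [lintegral_const_mul' _ _ ENNReal.ofReal_ne_top,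
    ← ofReal_integral_eq_lintegral_ofReal hint
      ((ae_restrict_iff' measurableSet_Ioi).2 (ae_of_all _ fun s hs => by
        have hs0 : (0:ℝ) < s := hs
        positivity)),
    hval, ← ENNReal.ofReal_mul hnn]
  congr 1
  ring

lemma const_core {m : ℕ} {a α t d : ℝ} (ha : 0 < a) (hα : 0 < α) (ht : 0 < t) (hd : 0 < d) :
    (4*Real.pi*t) ^ (-(m:ℝ)/2) * a ^ (2*m) * (2*α)⁻¹ *
        (a^2*d^2/(4*t)) ^ (-((2*(m:ℝ)*α - 1)/(2*α)))
      = 2 ^ ((m:ℝ) - 1 - 1/α) * Real.pi ^ (-(m:ℝ)/2) * α⁻¹ *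
          a ^ (1/α) * t ^ (((m:ℝ)*α - 1)/(2*α)) * d ^ ((1 - 2*(m:ℝ)*α)/α) := by
  have hπ := Real.pi_pos
  refine Real.log_injOn_pos (Set.mem_Ioi.2 (by positivity)) (Set.mem_Ioi.2 (by positivity)) ?_
  rw [Real.log_mul (by positivity) (by positivity),
      Real.log_mul (by positivity) (by positivity),
      Real.log_mul (by positivity) (by positivity),
      Real.log_rpow (by positivity),
      Real.log_mul (by positivity) (by positivity),
      Real.log_mul (by norm_num) (by positivity),
      Real.log_pow, Real.log_inv,
      Real.log_mul (by norm_num) (by positivity),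
      Real.log_rpow (by positivity),
      Real.log_div (by positivity) (by positivity),
      Real.log_mul (by positivity) (by positivity),
      Real.log_mul (by norm_num) (by positivity),
      Real.log_pow, Real.log_pow,
      Real.log_mul (by positivity) (by positivity),
      Real.log_mul (by positivity) (by positivity),
      Real.log_mul (by positivity) (by positivity),
      Real.log_mul (by positivity) (by positivity),
      Real.log_mul (by positivity) (by positivity),
      Real.log_rpow (by norm_num),
      Real.log_rpow (by positivity),
      Real.log_inv,
      Real.log_rpow (by positivity),
      Real.log_rpow (by positivity),
      Real.log_rpow (by positivity),
      show Real.log 4 = 2 * Real.log 2 by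
        rw [show (4:ℝ) = 2^(2:ℕ) by norm_num, Real.log_pow]; push_cast; ring]
  push_cast
  field_simp
  ring

lemma heatContent_mono {m : ℕ} {Ω Ω' : Set (EuclideanSpace ℝ (Fin m))} (h : Ω ⊆ Ω') (t : ℝ) :
    heatContent Ω t ≤ heatContent Ω' t := by
  unfold heatContent
  refine lintegral_mono' (Measure.restrict_mono h le_rfl) fun x => ?_
  exact lintegral_mono' (Measure.restrict_mono h le_rfl) fun y => le_rfl

lemma sum_le_int {m : ℕ} {a α : ℝ} (ha : 0 < a) (hα : 0 < α) (t : ℝ) :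
    (∑' i : ℕ,
        heatContent (ball (0 : EuclideanSpace ℝ (Fin m)) (a * ((i : ℝ) + 1) ^ (-α))) t)
      ≤ ∫⁻ s in Set.Ioi (0 : ℝ),
          heatContent (ball (0 : EuclideanSpace ℝ (Fin m)) (a * s ^ (-α))) t := by
  have hunion : Set.Ioi (0:ℝ) = ⋃ i : ℕ, Set.Ioc ((i:ℝ)) ((i:ℝ)+1) := by
    ext x
    simp only [Set.mem_Ioi, Set.mem_iUnion, Set.mem_Ioc]
    constructor
    · intro hx
      refine ⟨⌈x⌉₊ - 1, ?_, ?_⟩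
      · have h1 : 1 ≤ ⌈x⌉₊ := Nat.one_le_ceil_iff.2 hx
        have := Nat.ceil_lt_add_one hx.le
        push_cast [Nat.cast_sub h1]
        linarith
      · have h1 : 1 ≤ ⌈x⌉₊ := Nat.one_le_ceil_iff.2 hx
        have := Nat.le_ceil x
        push_cast [Nat.cast_sub h1]
        linarith
    · rintro ⟨i, h1, _⟩
      exact lt_of_le_of_lt (by positivity) h1
  rw [hunion, lintegral_iUnion (fun i => measurableSet_Ioc) ?_]
  · refine ENNReal.tsum_le_tsum fun i => ?_
    have hle : ∀ s ∈ Set.Ioc ((i:ℝ)) ((i:ℝ)+1),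
        heatContent (ball (0 : EuclideanSpace ℝ (Fin m)) (a * ((i : ℝ) + 1) ^ (-α))) t
          ≤ heatContent (ball (0 : EuclideanSpace ℝ (Fin m)) (a * s ^ (-α))) t := by
      intro s hs
      refine heatContent_mono (ball_subset_ball ?_) t
      have hs0 : (0:ℝ) < s := lt_of_le_of_lt (by positivity) hs.1
      have : ((i:ℝ)+1) ^ (-α) ≤ s ^ (-α) :=
        Real.rpow_le_rpow_of_nonpos hs0 hs.2 (by linarith)
      nlinarith
    calc heatContent (ball (0 : EuclideanSpace ℝ (Fin m)) (a * ((i : ℝ) + 1) ^ (-α))) t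
        = (heatContent (ball (0 : EuclideanSpace ℝ (Fin m)) (a * ((i : ℝ) + 1) ^ (-α))) t)
            * volume (Set.Ioc ((i:ℝ)) ((i:ℝ)+1)) := by
          rw [Real.volume_Ioc, show (i:ℝ)+1-(i:ℝ) = 1 by ring, ENNReal.ofReal_one, mul_one]
      _ = ∫⁻ _ in Set.Ioc ((i:ℝ)) ((i:ℝ)+1),
            heatContent (ball (0 : EuclideanSpace ℝ (Fin m)) (a * ((i : ℝ) + 1) ^ (-α))) t :=
          (setLIntegral_const _ _).symm
      _ ≤ ∫⁻ s in Set.Ioc ((i:ℝ)) ((i:ℝ)+1),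
            heatContent (ball (0 : EuclideanSpace ℝ (Fin m)) (a * s ^ (-α))) t :=
          lintegral_mono_ae ((ae_restrict_iff' measurableSet_Ioc).2 (ae_of_all _ hle))
  · intro i j hij
    simp only [Function.onFun, Set.Ioc_disjoint_Ioc]
    rcases lt_or_gt_of_ne hij with h | h
    · have : (i:ℝ) + 1 ≤ (j:ℝ) := by exact_mod_cast h
      rw [min_def, max_def]
      split_ifs <;> push_cast <;> linarith
    · have : (j:ℝ) + 1 ≤ (i:ℝ) := by exact_mod_cast h
      rw [min_def, max_def]
      split_ifs <;> push_cast <;> linarith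

end Auxiliary

/-- For `1/(2m) < α < 1/m` and `0 < a ≤ 1/4`, the sum of the heat contents of the balls
`B(0; a i^{-α})`, `i ≥ 1`, is bounded by the integral `∫_0^∞ H_{B(0; a s^{-α})}(t) ds`,
which equals `c_{α,m} t^{(mα-1)/(2α)}` with
`c_{α,m} = 2^{m-1-1/α} π^{-m/2} α⁻¹ Γ((2mα-1)/(2α)) a^{1/α}
  ∫_{B(0;1)} ∫_{B(0;1)} |x-y|^{(1-2mα)/α} dy dx`. -/
theorem sum_heat_content_balls_le_integral
    (m : ℕ) (hm : 2 ≤ m) (a α : ℝ) (ha : 0 < a) (ha' : a ≤ 1 / 4)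
    (hα₁ : 1 / (2 * m) < α) (hα₂ : α < 1 / m)
    (c : ℝ)
    (hc : c = 2 ^ ((m : ℝ) - 1 - 1 / α) * Real.pi ^ (-(m : ℝ) / 2) * α⁻¹ *
      Real.Gamma ((2 * (m : ℝ) * α - 1) / (2 * α)) * a ^ (1 / α) *
      ∫ x in ball (0 : EuclideanSpace ℝ (Fin m)) 1,
        ∫ y in ball (0 : EuclideanSpace ℝ (Fin m)) 1,
          ‖x - y‖ ^ ((1 - 2 * (m : ℝ) * α) / α)) :
    ∀ t : ℝ, 0 < t →
      (∑' i : ℕ,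
          heatContent (ball (0 : EuclideanSpace ℝ (Fin m)) (a * ((i : ℝ) + 1) ^ (-α))) t)
        ≤ ∫⁻ s in Set.Ioi (0 : ℝ),
            heatContent (ball (0 : EuclideanSpace ℝ (Fin m)) (a * s ^ (-α))) t ∧
      (∫⁻ s in Set.Ioi (0 : ℝ),
          heatContent (ball (0 : EuclideanSpace ℝ (Fin m)) (a * s ^ (-α))) t)
        = ENNReal.ofReal (c * t ^ (((m : ℝ) * α - 1) / (2 * α))) := by
  intro t ht
  haveI : Nonempty (Fin m) := ⟨⟨0, by omega⟩⟩
  have hm0 : (0:ℝ) < (m:ℝ) := by exact_mod_cast (by omega : 0 < m)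
  have hα0 : 0 < α := lt_trans (by positivity) hα₁
  have he : 1 < 2*(m:ℝ)*α := by
    rw [div_lt_iff₀ (by positivity)] at hα₁
    linarith
  have hmα : (m:ℝ)*α < 1 := by
    rw [lt_div_iff₀ hm0] at hα₂
    linarith
  refine ⟨sum_le_int ha hα0 t, ?_⟩
  -- notation
  set P : ℝ := (1 - 2*(m:ℝ)*α)/α with hP
  have hPneg : P < 0 := div_neg_of_neg_of_pos (by linarith) hα0
  have hPm : -(m:ℝ) < P := by
    rw [hP, neg_lt, neg_div']
    rw [div_lt_iff₀ hα0]
    nlinarith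
  set G : ℝ := Real.Gamma ((2*(m:ℝ)*α - 1)/(2*α)) with hG
  have hGpos : 0 < G := Real.Gamma_pos_of_pos (div_pos (by linarith) (by positivity))
  set Dc : ℝ := 2 ^ ((m:ℝ) - 1 - 1/α) * Real.pi ^ (-(m:ℝ)/2) * α⁻¹ * G * a ^ (1/α)
      * t ^ (((m:ℝ)*α - 1)/(2*α)) with hDc
  have hDc0 : 0 ≤ Dc := by
    have h1 : (0:ℝ) ≤ 2 ^ ((m:ℝ) - 1 - 1/α) := Real.rpow_nonneg (by norm_num) _
    have h2 : (0:ℝ) ≤ Real.pi ^ (-(m:ℝ)/2) := Real.rpow_nonneg Real.pi_pos.le _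
    have h3 : (0:ℝ) ≤ a ^ (1/α) := Real.rpow_nonneg ha.le _
    have h4 : (0:ℝ) ≤ t ^ (((m:ℝ)*α - 1)/(2*α)) := Real.rpow_nonneg ht.le _
    have h5 : (0:ℝ) ≤ α⁻¹ := by positivity
    exact mul_nonneg (mul_nonneg (mul_nonneg (mul_nonneg (mul_nonneg h1 h2) h5) hGpos.le) h3) h4
  have hInt := int_prod_rpow (m := m) (by omega) hPm hPneg
  -- Step 1 : rescale each heat content
  have step1 : ∀ s ∈ Set.Ioi (0:ℝ),
      heatContent (ball (0 : EuclideanSpace ℝ (Fin m)) (a * s ^ (-α))) t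
        = ∫⁻ u in ball (0 : EuclideanSpace ℝ (Fin m)) 1,
            ∫⁻ v in ball (0 : EuclideanSpace ℝ (Fin m)) 1,
            ENNReal.ofReal ((a * s ^ (-α)) ^ (2*m) *
              ((4*Real.pi*t) ^ (-(m:ℝ)/2)
                * Real.exp (-(a * s ^ (-α) * dist u v) ^ 2 / (4*t)))) := by
    intro s hs
    have hs0 : (0:ℝ) < s := hs
    exact heatContent_ball_scaled (by positivity)
  rw [setLIntegral_congr_fun measurableSet_Ioi step1]
  -- Step 2 : two Tonelli swaps
  have hmeas3 : Measurable fun p : ℝ × EuclideanSpace ℝ (Fin m) × EuclideanSpace ℝ (Fin m) =>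
      ENNReal.ofReal ((a * p.1 ^ (-α)) ^ (2*m) *
        ((4*Real.pi*t) ^ (-(m:ℝ)/2)
          * Real.exp (-(a * p.1 ^ (-α) * dist p.2.1 p.2.2) ^ 2 / (4*t)))) := by
    fun_prop
  have swap1 : (∫⁻ s in Set.Ioi (0:ℝ), ∫⁻ u in ball (0 : EuclideanSpace ℝ (Fin m)) 1,
        ∫⁻ v in ball (0 : EuclideanSpace ℝ (Fin m)) 1,
          ENNReal.ofReal ((a * s ^ (-α)) ^ (2*m) *
            ((4*Real.pi*t) ^ (-(m:ℝ)/2) * Real.exp (-(a * s ^ (-α) * dist u v) ^ 2 / (4*t)))))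
      = ∫⁻ u in ball (0 : EuclideanSpace ℝ (Fin m)) 1, ∫⁻ s in Set.Ioi (0:ℝ),
          ∫⁻ v in ball (0 : EuclideanSpace ℝ (Fin m)) 1,
            ENNReal.ofReal ((a * s ^ (-α)) ^ (2*m) *
              ((4*Real.pi*t) ^ (-(m:ℝ)/2)
                * Real.exp (-(a * s ^ (-α) * dist u v) ^ 2 / (4*t)))) := by
    refine lintegral_lintegral_swap ?_
    refine Measurable.aemeasurable ?_
    exact Measurable.lintegral_prod_right'
      (f := fun q : (ℝ × EuclideanSpace ℝ (Fin m)) × EuclideanSpace ℝ (Fin m) =>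
        ENNReal.ofReal ((a * q.1.1 ^ (-α)) ^ (2*m) *
          ((4*Real.pi*t) ^ (-(m:ℝ)/2)
            * Real.exp (-(a * q.1.1 ^ (-α) * dist q.1.2 q.2) ^ 2 / (4*t))))) (by fun_prop)
  rw [swap1]
  have swap2 : ∀ u : EuclideanSpace ℝ (Fin m),
      (∫⁻ s in Set.Ioi (0:ℝ), ∫⁻ v in ball (0 : EuclideanSpace ℝ (Fin m)) 1,
          ENNReal.ofReal ((a * s ^ (-α)) ^ (2*m) *
            ((4*Real.pi*t) ^ (-(m:ℝ)/2) * Real.exp (-(a * s ^ (-α) * dist u v) ^ 2 / (4*t)))))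
      = ∫⁻ v in ball (0 : EuclideanSpace ℝ (Fin m)) 1, ∫⁻ s in Set.Ioi (0:ℝ),
          ENNReal.ofReal ((a * s ^ (-α)) ^ (2*m) *
            ((4*Real.pi*t) ^ (-(m:ℝ)/2)
              * Real.exp (-(a * s ^ (-α) * dist u v) ^ 2 / (4*t)))) := by
    intro u
    exact lintegral_lintegral_swap (Measurable.aemeasurable (by fun_prop))
  simp_rw [swap2]
  -- Step 3 : evaluate inner s-integral off the diagonal
  have key : ∀ u v : EuclideanSpace ℝ (Fin m), v ≠ u →
      (∫⁻ s in Set.Ioi (0:ℝ),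
          ENNReal.ofReal ((a * s ^ (-α)) ^ (2*m) *
            ((4*Real.pi*t) ^ (-(m:ℝ)/2) * Real.exp (-(a * s ^ (-α) * dist u v) ^ 2 / (4*t)))))
        = ENNReal.ofReal (Dc * ‖u - v‖ ^ P) := by
    intro u v hvu
    have hd : 0 < dist u v := dist_pos.2 (Ne.symm hvu)
    rw [inner_s_integral ha hα0 ht he hd]
    congr 1
    have hdn : dist u v = ‖u - v‖ := dist_eq_norm u v
    have hd' : 0 < ‖u - v‖ := by rwa [hdn] at hd
    rw [hdn]
    have hcore := const_core (m := m) (d := ‖u - v‖) ha hα0 ht hd'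
    rw [hDc, hG, hP]
    linear_combination Real.Gamma ((2*(m:ℝ)*α - 1)/(2*α)) * hcore
  have step3 : ∀ u : EuclideanSpace ℝ (Fin m),
      (∫⁻ v in ball (0 : EuclideanSpace ℝ (Fin m)) 1, ∫⁻ s in Set.Ioi (0:ℝ),
          ENNReal.ofReal ((a * s ^ (-α)) ^ (2*m) *
            ((4*Real.pi*t) ^ (-(m:ℝ)/2) * Real.exp (-(a * s ^ (-α) * dist u v) ^ 2 / (4*t)))))
      = ∫⁻ v in ball (0 : EuclideanSpace ℝ (Fin m)) 1,
          ENNReal.ofReal (Dc * ‖u - v‖ ^ P) := by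
    intro u
    refine lintegral_congr_ae (ae_restrict_of_ae ?_)
    have hsub : {v : EuclideanSpace ℝ (Fin m) |
        ¬ ((∫⁻ s in Set.Ioi (0:ℝ),
          ENNReal.ofReal ((a * s ^ (-α)) ^ (2*m) *
            ((4*Real.pi*t) ^ (-(m:ℝ)/2) * Real.exp (-(a * s ^ (-α) * dist u v) ^ 2 / (4*t)))))
          = ENNReal.ofReal (Dc * ‖u - v‖ ^ P))} ⊆ {u} := by
      intro v hv
      simp only [Set.mem_setOf_eq] at hv
      simp only [Set.mem_singleton_iff]
      by_contra hne
      exact hv (key u v hne)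
    exact ae_iff.2 (measure_mono_null hsub (measure_singleton u))
  simp_rw [step3]
  -- Step 4 : pull out the constant and compute the remaining integral
  simp_rw [ENNReal.ofReal_mul hDc0]
  simp_rw [lintegral_const_mul' (ENNReal.ofReal Dc) _ ENNReal.ofReal_ne_top]
  have hII : (∫⁻ u in ball (0 : EuclideanSpace ℝ (Fin m)) 1,
        ∫⁻ v in ball (0 : EuclideanSpace ℝ (Fin m)) 1, ENNReal.ofReal (‖u - v‖ ^ P))
      = ENNReal.ofReal (∫ x in ball (0 : EuclideanSpace ℝ (Fin m)) 1,
          ∫ y in ball (0 : EuclideanSpace ℝ (Fin m)) 1, ‖x - y‖ ^ P) := by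
    calc (∫⁻ u in ball (0 : EuclideanSpace ℝ (Fin m)) 1,
            ∫⁻ v in ball (0 : EuclideanSpace ℝ (Fin m)) 1, ENNReal.ofReal (‖u - v‖ ^ P))
        = ∫⁻ z : EuclideanSpace ℝ (Fin m) × EuclideanSpace ℝ (Fin m),
            ENNReal.ofReal (‖z.1 - z.2‖ ^ P)
            ∂((volume.restrict (ball 0 1)).prod (volume.restrict (ball 0 1))) :=
          (lintegral_prod (fun z : EuclideanSpace ℝ (Fin m) × EuclideanSpace ℝ (Fin m) =>
            ENNReal.ofReal (‖z.1 - z.2‖ ^ P)) (Measurable.aemeasurable (by fun_prop))).symm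
      _ = ENNReal.ofReal (∫ z : EuclideanSpace ℝ (Fin m) × EuclideanSpace ℝ (Fin m),
            ‖z.1 - z.2‖ ^ P
            ∂((volume.restrict (ball 0 1)).prod (volume.restrict (ball 0 1)))) :=
          (ofReal_integral_eq_lintegral_ofReal hInt
            (ae_of_all _ fun z => Real.rpow_nonneg (norm_nonneg _) _)).symm
      _ = ENNReal.ofReal (∫ x in ball (0 : EuclideanSpace ℝ (Fin m)) 1,
            ∫ y in ball (0 : EuclideanSpace ℝ (Fin m)) 1, ‖x - y‖ ^ P) :=
          congrArg ENNReal.ofReal (integral_prod _ hInt)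
  rw [hII, ← ENNReal.ofReal_mul hDc0]
  congr 1
  rw [hDc, hc]
  ring
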